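/- The forgetful functor Lens → Cat (sending a lens to its Get functor) sends the fake pullback of a cospan of lenses to a genuine pullback square in Cat. -/

import Mathlib

open CategoryTheory

universe w v u v₁ u₁ v₂ u₂ v₃ u₃

section Helpers

/-- The hom-type of a category structure, given explicitly. -/
def homOf {C : Type u₁} (cc : Category.{v₁} C) (x y : C) : Type v₁ :=
  @Quiver.Hom C cc.toCategoryStruct.toQuiver x y

/-- Object part of a functor, with explicit category structures. -/
def objOf {C : Type u₁} {D : Type u₂} (cc : Category.{v₁} C) (cd : Category.{v₂} D)
    (F : @Functor C cc D cd) : C → D := F.obj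

/-- Morphism part of a functor, with explicit category structures. -/
def mapOf {C : Type u₁} {D : Type u₂} (cc : Category.{v₁} C) (cd : Category.{v₂} D)
    (F : @Functor C cc D cd) {x y : C} (u : homOf cc x y) :
    homOf cd (objOf cc cd F x) (objOf cc cd F y) := F.map u

/-- Discrete opfibration: every morphism out of the image of an object has a unique
lift with that source. -/
def IsDiscreteOpfibration {X : Type u₁} {Y : Type u₂} (cx : Category.{v₁} X)
    (cy : Category.{v₂} Y) (F : @Functor X cx Y cy) : Prop :=
  ∀ (x : X) (y : Y) (u : homOf cy (objOf cx cy F x) y),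
    ∃! t : (Σ x' : X, homOf cx x x'),
      objOf cx cy F t.1 = y ∧ HEq (mapOf cx cy F t.2) u

/-- Fully faithful, as a property. -/
def IsFullyFaithfulP {X : Type u₁} {Y : Type u₂} (cx : Category.{v₁} X)
    (cy : Category.{v₂} Y) (F : @Functor X cx Y cy) : Prop :=
  ∀ (x x' : X) (u : homOf cy (objOf cx cy F x) (objOf cx cy F x')),
    ∃! w : homOf cx x x', mapOf cx cy F w = u

end Helpers
/-- An asymmetric delta lens `A ⇌ B`: a Get functor together with a Put operation
lifting morphisms of `B` out of `get.obj a` to morphisms of `A` out of `a`, satisfying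
the PutGet, GetPut and PutPut laws. -/
structure Lens (A : Type u₁) (B : Type u₂) [Category.{v₁} A] [Category.{v₂} B] where
  get : A ⥤ B
  tgt : ∀ (a : A) {b : B}, (get.obj a ⟶ b) → A
  put : ∀ (a : A) {b : B} (u : get.obj a ⟶ b), a ⟶ tgt a u
  obj_tgt : ∀ (a : A) {b : B} (u : get.obj a ⟶ b), get.obj (tgt a u) = b
  putget : ∀ (a : A) {b : B} (u : get.obj a ⟶ b), HEq (get.map (put a u)) u
  tgt_id : ∀ a : A, tgt a (𝟙 (get.obj a)) = a
  getput : ∀ a : A, HEq (put a (𝟙 (get.obj a))) (𝟙 a)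
  tgt_comp : ∀ (a : A) {b c : B} (u : get.obj a ⟶ b) (v : b ⟶ c)
    (v' : get.obj (tgt a u) ⟶ c), HEq v' v → tgt a (u ≫ v) = tgt (tgt a u) v'
  putput : ∀ (a : A) {b c : B} (u : get.obj a ⟶ b) (v : b ⟶ c)
    (v' : get.obj (tgt a u) ⟶ c), HEq v' v →
    HEq (put a (u ≫ v)) (put a u ≫ put (tgt a u) v')
section Pullback

variable {A B C : Type u} [Category.{v} A] [Category.{v} B] [Category.{v} C]

/-- The pullback of two functors in `Cat`: objects are pairs whose images agree. -/
def PB (f : A ⥤ B) (g : C ⥤ B) : Type u := { p : A × C // f.obj p.1 = g.obj p.2 }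

/-- Morphisms in the pullback category: pairs of morphisms whose images agree. -/
@[ext] structure PBHom {f : A ⥤ B} {g : C ⥤ B} (x y : PB f g) where
  m1 : x.1.1 ⟶ y.1.1
  m2 : x.1.2 ⟶ y.1.2
  w : f.map m1 ≫ eqToHom y.2 = eqToHom x.2 ≫ g.map m2

instance PB.category (f : A ⥤ B) (g : C ⥤ B) : Category.{v} (PB f g) where
  Hom x y := PBHom x y
  id x := ⟨𝟙 _, 𝟙 _, by simp⟩
  comp m n := ⟨m.m1 ≫ n.m1, m.m2 ≫ n.m2, by
    rw [Functor.map_comp, Functor.map_comp, Category.assoc, n.w, ← Category.assoc,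
      m.w, Category.assoc]⟩
  id_comp m := by apply PBHom.ext <;> simp
  comp_id m := by apply PBHom.ext <;> simp
  assoc m n o := by apply PBHom.ext <;> simp

/-- The first projection of the pullback. -/
def PB.proj₁ (f : A ⥤ B) (g : C ⥤ B) : PB f g ⥤ A where
  obj x := x.1.1
  map m := m.m1

/-- The second projection of the pullback. -/
def PB.proj₂ (f : A ⥤ B) (g : C ⥤ B) : PB f g ⥤ C where
  obj x := x.1.2
  map m := m.m2

end Pullback

section FPAux

open CategoryTheory

lemma Lens.tgt_eqToHom {A : Type u₁} {B : Type u₂} [Category.{v₁} A] [Category.{v₂} B]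
    (l : Lens A B) (a : A) {b : B} (h : l.get.obj a = b) : l.tgt a (eqToHom h) = a := by
  subst h; exact l.tgt_id a

lemma Lens.put_eqToHom {A : Type u₁} {B : Type u₂} [Category.{v₁} A] [Category.{v₂} B]
    (l : Lens A B) (a : A) {b : B} (h : l.get.obj a = b) : HEq (l.put a (eqToHom h)) (𝟙 a) := by
  subst h; exact l.getput a

lemma Lens.tgt_congr {A : Type u₁} {B : Type u₂} [Category.{v₁} A] [Category.{v₂} B]
    (l : Lens A B) (a : A) {b : B} (u v : l.get.obj a ⟶ b) (h : u = v) :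
    l.tgt a u = l.tgt a v := by subst h; rfl

lemma Lens.put_congr {A : Type u₁} {B : Type u₂} [Category.{v₁} A] [Category.{v₂} B]
    (l : Lens A B) (a : A) {b : B} (u v : l.get.obj a ⟶ b) (h : u = v) :
    HEq (l.put a u) (l.put a v) := by subst h; rfl

lemma eq_conj_of_heq {D : Type u₁} [Category.{v₁} D] {X X' Y Y' : D} (e : X = X') (e' : Y = Y')
    {f : X ⟶ Y} {g : X' ⟶ Y'} (h : HEq f g) : f ≫ eqToHom e' = eqToHom e ≫ g := by
  subst e; subst e'; simpa using eq_of_heq h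

variable {A B C : Type u} [Category.{v} A] [Category.{v} B] [Category.{v} C]

lemma PBHom_hext {f : A ⥤ B} {g : C ⥤ B} {x x' y y' : PB f g} (ex : x = x') (e : y = y')
    (m : PBHom x y) (m' : PBHom x' y') (h1 : HEq m.m1 m'.m1) (h2 : HEq m.m2 m'.m2) :
    HEq m m' := by
  subst ex; subst e; exact heq_of_eq (PBHom.ext (eq_of_heq h1) (eq_of_heq h2))

@[simp] lemma PB_id_m1 {f : A ⥤ B} {g : C ⥤ B} (x : PB f g) :
    PBHom.m1 (𝟙 x) = 𝟙 x.1.1 := rfl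

@[simp] lemma PB_id_m2 {f : A ⥤ B} {g : C ⥤ B} (x : PB f g) :
    PBHom.m2 (𝟙 x) = 𝟙 x.1.2 := rfl

@[simp] lemma PB_comp_m1 {f : A ⥤ B} {g : C ⥤ B} {x y z : PB f g}
    (m : x ⟶ y) (n : y ⟶ z) : PBHom.m1 (m ≫ n) = PBHom.m1 m ≫ PBHom.m1 n := rfl

@[simp] lemma PB_comp_m2 {f : A ⥤ B} {g : C ⥤ B} {x y z : PB f g}
    (m : x ⟶ y) (n : y ⟶ z) : PBHom.m2 (m ≫ n) = PBHom.m2 m ≫ PBHom.m2 n := rfl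

/-- The lens structure on the first projection of the fake pullback. -/
def fpLens₁ (l1 : Lens A B) (l2 : Lens C B) : Lens (PB l1.get l2.get) A where
  get := PB.proj₁ _ _
  tgt := fun x {b} u =>
    ⟨(b, l2.tgt x.1.2 (eqToHom x.2.symm ≫ l1.get.map u)), (l2.obj_tgt _ _).symm⟩
  put := fun x {b} u =>
    (⟨u, l2.put x.1.2 (eqToHom x.2.symm ≫ l1.get.map u),
      (eq_conj_of_heq x.2 (l2.obj_tgt _ _).symm
        ((l2.putget _ _).trans (eqToHom_comp_heq _ _)).symm)⟩ : PBHom _ _)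
  obj_tgt := by intros; rfl
  putget := by intros; exact HEq.rfl
  tgt_id := by
    rintro ⟨⟨a, c⟩, hx⟩
    refine Subtype.ext (Prod.ext rfl ?_)
    show l2.tgt c (eqToHom hx.symm ≫ l1.get.map (𝟙 a)) = c
    exact (l2.tgt_congr c _ _ (by simp)).trans (l2.tgt_eqToHom c hx.symm)
  getput := by
    rintro ⟨⟨a, c⟩, hx⟩
    refine PBHom_hext rfl ?_ _ _ HEq.rfl ?_
    · refine Subtype.ext (Prod.ext rfl ?_)
      show l2.tgt c (eqToHom hx.symm ≫ l1.get.map (𝟙 a)) = c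
      exact (l2.tgt_congr c _ _ (by simp)).trans (l2.tgt_eqToHom c hx.symm)
    · show HEq (l2.put c (eqToHom hx.symm ≫ l1.get.map (𝟙 a))) (𝟙 c)
      exact (l2.put_congr c _ _ (by simp)).trans (l2.put_eqToHom c hx.symm)
  tgt_comp := by
    rintro ⟨⟨a₀, c₀⟩, hx⟩ ba ca ua va vb hv
    have hv' : vb = va := eq_of_heq hv
    subst hv'
    refine Subtype.ext (Prod.ext rfl ?_)
    show l2.tgt c₀ (eqToHom hx.symm ≫ l1.get.map (ua ≫ vb)) =
      l2.tgt (l2.tgt c₀ (eqToHom hx.symm ≫ l1.get.map ua))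
        (eqToHom (l2.obj_tgt _ _) ≫ l1.get.map vb)
    refine (l2.tgt_congr c₀ _ _ ((congrArg (eqToHom hx.symm ≫ ·) (l1.get.map_comp ua vb)).trans (Category.assoc _ _ _).symm)).trans ?_
    exact l2.tgt_comp c₀ _ (l1.get.map vb) _ (eqToHom_comp_heq _ _)
  putput := by
    rintro ⟨⟨a₀, c₀⟩, hx⟩ ba ca ua va vb hv
    have hv' : vb = va := eq_of_heq hv
    subst hv'
    refine PBHom_hext rfl ?_ _ _ HEq.rfl ?_
    · refine Subtype.ext (Prod.ext rfl ?_)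
      show l2.tgt c₀ (eqToHom hx.symm ≫ l1.get.map (ua ≫ vb)) =
        l2.tgt (l2.tgt c₀ (eqToHom hx.symm ≫ l1.get.map ua))
          (eqToHom (l2.obj_tgt _ _) ≫ l1.get.map vb)
      refine (l2.tgt_congr c₀ _ _ ((congrArg (eqToHom hx.symm ≫ ·) (l1.get.map_comp ua vb)).trans (Category.assoc _ _ _).symm)).trans ?_
      exact l2.tgt_comp c₀ _ (l1.get.map vb) _ (eqToHom_comp_heq _ _)
    · show HEq (l2.put c₀ (eqToHom hx.symm ≫ l1.get.map (ua ≫ vb)))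
        (l2.put c₀ (eqToHom hx.symm ≫ l1.get.map ua) ≫
          l2.put (l2.tgt c₀ (eqToHom hx.symm ≫ l1.get.map ua))
            (eqToHom (l2.obj_tgt _ _) ≫ l1.get.map vb))
      refine (l2.put_congr c₀ _ _ ((congrArg (eqToHom hx.symm ≫ ·) (l1.get.map_comp ua vb)).trans (Category.assoc _ _ _).symm)).trans ?_
      exact l2.putput c₀ _ (l1.get.map vb) _ (eqToHom_comp_heq _ _)

/-- The lens structure on the second projection of the fake pullback. -/
def fpLens₂ (l1 : Lens A B) (l2 : Lens C B) : Lens (PB l1.get l2.get) C where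
  get := PB.proj₂ _ _
  tgt := fun x {b} u =>
    ⟨(l1.tgt x.1.1 (eqToHom x.2 ≫ l2.get.map u), b), l1.obj_tgt _ _⟩
  put := fun x {b} u =>
    (⟨l1.put x.1.1 (eqToHom x.2 ≫ l2.get.map u), u,
      (eq_conj_of_heq x.2 (l1.obj_tgt _ _)
        ((l1.putget _ _).trans (eqToHom_comp_heq _ _)))⟩ : PBHom _ _)
  obj_tgt := by intros; rfl
  putget := by intros; exact HEq.rfl
  tgt_id := by
    rintro ⟨⟨a, c⟩, hx⟩
    refine Subtype.ext (Prod.ext ?_ rfl)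
    show l1.tgt a (eqToHom hx ≫ l2.get.map (𝟙 c)) = a
    exact (l1.tgt_congr a _ _ (by simp)).trans (l1.tgt_eqToHom a hx)
  getput := by
    rintro ⟨⟨a, c⟩, hx⟩
    refine PBHom_hext rfl ?_ _ _ ?_ HEq.rfl
    · refine Subtype.ext (Prod.ext ?_ rfl)
      show l1.tgt a (eqToHom hx ≫ l2.get.map (𝟙 c)) = a
      exact (l1.tgt_congr a _ _ (by simp)).trans (l1.tgt_eqToHom a hx)
    · show HEq (l1.put a (eqToHom hx ≫ l2.get.map (𝟙 c))) (𝟙 a)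
      exact (l1.put_congr a _ _ (by simp)).trans (l1.put_eqToHom a hx)
  tgt_comp := by
    rintro ⟨⟨a₀, c₀⟩, hx⟩ ba ca ua va vb hv
    have hv' : vb = va := eq_of_heq hv
    subst hv'
    refine Subtype.ext (Prod.ext ?_ rfl)
    show l1.tgt a₀ (eqToHom hx ≫ l2.get.map (ua ≫ vb)) =
      l1.tgt (l1.tgt a₀ (eqToHom hx ≫ l2.get.map ua))
        (eqToHom (l1.obj_tgt _ _) ≫ l2.get.map vb)
    refine (l1.tgt_congr a₀ _ _ ((congrArg (eqToHom hx ≫ ·) (l2.get.map_comp ua vb)).trans (Category.assoc _ _ _).symm)).trans ?_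
    exact l1.tgt_comp a₀ _ (l2.get.map vb) _ (eqToHom_comp_heq _ _)
  putput := by
    rintro ⟨⟨a₀, c₀⟩, hx⟩ ba ca ua va vb hv
    have hv' : vb = va := eq_of_heq hv
    subst hv'
    refine PBHom_hext rfl ?_ _ _ ?_ HEq.rfl
    · refine Subtype.ext (Prod.ext ?_ rfl)
      show l1.tgt a₀ (eqToHom hx ≫ l2.get.map (ua ≫ vb)) =
        l1.tgt (l1.tgt a₀ (eqToHom hx ≫ l2.get.map ua))
          (eqToHom (l1.obj_tgt _ _) ≫ l2.get.map vb)
      refine (l1.tgt_congr a₀ _ _ ((congrArg (eqToHom hx ≫ ·) (l2.get.map_comp ua vb)).trans (Category.assoc _ _ _).symm)).trans ?_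
      exact l1.tgt_comp a₀ _ (l2.get.map vb) _ (eqToHom_comp_heq _ _)
    · show HEq (l1.put a₀ (eqToHom hx ≫ l2.get.map (ua ≫ vb)))
        (l1.put a₀ (eqToHom hx ≫ l2.get.map ua) ≫
          l1.put (l1.tgt a₀ (eqToHom hx ≫ l2.get.map ua))
            (eqToHom (l1.obj_tgt _ _) ≫ l2.get.map vb))
      refine (l1.put_congr a₀ _ _ ((congrArg (eqToHom hx ≫ ·) (l2.get.map_comp ua vb)).trans (Category.assoc _ _ _).symm)).trans ?_
      exact l1.putput a₀ _ (l2.get.map vb) _ (eqToHom_comp_heq _ _)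

end FPAux

/-- The forgetful functor `Lens → Cat` (taking Gets) sends the fake pullback of a cospan
of lenses to a genuine pullback in `Cat`: the projections of the fake pullback underlie
lenses, the square of Get functors commutes, and it satisfies the universal property of
the pullback of `l1.get` and `l2.get` in `Cat`. -/
theorem fake_pullback_is_pullback_in_Cat {A B C : Type u} [Category.{v} A]
    [Category.{v} B] [Category.{v} C] (l1 : Lens A B) (l2 : Lens C B) :
    -- the projections of the fake pullback underlie lenses
    (∃ p0 : Lens (PB l1.get l2.get) A, p0.get = PB.proj₁ l1.get l2.get) ∧
    (∃ p1 : Lens (PB l1.get l2.get) C, p1.get = PB.proj₂ l1.get l2.get) ∧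
    -- the square of underlying functors commutes
    PB.proj₁ l1.get l2.get ⋙ l1.get = PB.proj₂ l1.get l2.get ⋙ l2.get ∧
    -- and is a genuine pullback square in Cat
    ∀ (Q : Type u) [Category.{v} Q] (q0 : Q ⥤ A) (q1 : Q ⥤ C),
      q0 ⋙ l1.get = q1 ⋙ l2.get →
      ∃! h : Q ⥤ PB l1.get l2.get,
        h ⋙ PB.proj₁ l1.get l2.get = q0 ∧ h ⋙ PB.proj₂ l1.get l2.get = q1 := by
  refine ⟨⟨fpLens₁ l1 l2, rfl⟩, ⟨fpLens₂ l1 l2, rfl⟩, ?_, ?_⟩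
  · have hobj : ∀ x : PB l1.get l2.get,
        (PB.proj₁ l1.get l2.get ⋙ l1.get).obj x = (PB.proj₂ l1.get l2.get ⋙ l2.get).obj x :=
      fun x => x.2
    refine CategoryTheory.Functor.ext hobj ?_
    intro x y m
    have := m.w
    rw [comp_eqToHom_iff] at this
    simpa [PB.proj₁, PB.proj₂] using this
  · intro Q _ q0 q1 comm
    have hobj : ∀ q, l1.get.obj (q0.obj q) = l2.get.obj (q1.obj q) :=
      fun q => Functor.congr_obj comm q
    refine ⟨{ obj := fun q => ⟨(q0.obj q, q1.obj q), hobj q⟩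
              map := fun {x y} m => (⟨q0.map m, q1.map m, ?_⟩ : PBHom _ _)
              map_id := ?_, map_comp := ?_ }, ⟨rfl, rfl⟩, ?_⟩
    · rw [comp_eqToHom_iff]
      simpa using Functor.congr_hom comm m
    · intro x
      apply PBHom.ext <;> simp <;> rfl
    · intro x y z f g
      apply PBHom.ext <;> simp <;> rfl
    · rintro h' ⟨hc1, hc2⟩
      refine Functor.hext (fun q =>
        Subtype.ext (Prod.ext (Functor.congr_obj hc1 q) (Functor.congr_obj hc2 q)))
        (fun x y f => ?_)
      refine PBHom_hext ?_ ?_ _ _ ?_ ?_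
      · exact Subtype.ext (Prod.ext (Functor.congr_obj hc1 x) (Functor.congr_obj hc2 x))
      · exact Subtype.ext (Prod.ext (Functor.congr_obj hc1 y) (Functor.congr_obj hc2 y))
      · exact (conj_eqToHom_iff_heq _ _ (Functor.congr_obj hc1 x) (Functor.congr_obj hc1 y)).1
          (Functor.congr_hom hc1 f)
      · exact (conj_eqToHom_iff_heq _ _ (Functor.congr_obj hc2 x) (Functor.congr_obj hc2 y)).1
          (Functor.congr_hom hc2 f)
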